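/- Let S be a set, F(S) the free group on S. Any equivalence relation ∼ on S × F(S) that is a ▷-congruence for (a,w) ▷ (b,z) := (a, w z⁻¹ b z) and such that the quotient (S × F(S))/∼ with the induced operation satisfies the idempotence law [x] ▷ [x] = [x] must contain the relation ∼_Q defined by (a, w₁) ∼_Q (b, w₂) iff a = b and w₂ = aᵏw₁ for some k ∈ ℤ. That is, (a, w₁) ∼_Q (b, w₂) implies (a, w₁) ∼ (b, w₂). -/

import Mathlib

def triOp {S : Type*} (p q : S × FreeGroup S) : S × FreeGroup S :=
  (p.1, p.2 * q.2⁻¹ * FreeGroup.of q.1 * q.2)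

def simQ {S : Type*} (p q : S × FreeGroup S) : Prop :=
  p.1 = q.1 ∧ ∃ k : ℤ, q.2 = (FreeGroup.of p.1) ^ k * p.2

/-- ∼_Q is the smallest ▷-congruence whose quotient is idempotent:
any equivalence relation that is a ▷-congruence and satisfies the idempotence law
on the quotient (equivalently, x ▷ x ∼ x for all x) contains ∼_Q. -/
theorem simQ_smallest_congruence {S : Type*} (sim : (S × FreeGroup S) → (S × FreeGroup S) → Prop)
    (h_equiv : Equivalence sim)
    (h_cong : ∀ p p' q q', sim p p' → sim q q' → sim (triOp p q) (triOp p' q'))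
    (h_idem : ∀ p, sim (triOp p p) p) :
    ∀ p q : S × FreeGroup S, simQ p q → sim p q := by
  have hdiag : ∀ (a : S) (x : FreeGroup S),
      triOp (a, x) (a, x) = (a, FreeGroup.of a * x) := by
    intro a x
    simp [triOp, mul_assoc]
  have hstep : ∀ (a : S) (x : FreeGroup S), sim (a, FreeGroup.of a * x) (a, x) := by
    intro a x
    have := h_idem (a, x)
    rwa [hdiag] at this
  have key : ∀ (a : S) (w : FreeGroup S) (k : ℤ),
      sim (a, w) (a, (FreeGroup.of a) ^ k * w) := by
    intro a w k
    induction k using Int.induction_on with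
    | zero => simpa using h_equiv.refl (a, w)
    | succ n ih =>
        refine h_equiv.trans ih (h_equiv.symm ?_)
        have := hstep a ((FreeGroup.of a) ^ (n : ℤ) * w)
        have heq : (FreeGroup.of a) ^ ((n : ℤ) + 1) * w
            = FreeGroup.of a * ((FreeGroup.of a) ^ (n : ℤ) * w) := by
          rw [zpow_add, zpow_one]; group
        rwa [heq]
    | pred n ih =>
        refine h_equiv.trans ih ?_
        have := hstep a ((FreeGroup.of a) ^ (-(n : ℤ) - 1) * w)
        have heq : (FreeGroup.of a) ^ (-(n : ℤ)) * w
            = FreeGroup.of a * ((FreeGroup.of a) ^ (-(n : ℤ) - 1) * w) := by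
          rw [sub_eq_add_neg, zpow_add]; group
        rwa [← heq] at this
  rintro ⟨a, w⟩ ⟨b, z⟩ ⟨rfl : a = b, k, rfl⟩
  exact key a w k
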